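/- For every K ≥ 4 there exists a constant C_K > 0, depending only on K, such that every simple K-round quadrilateral f = [z1,z2,z3,z4] in ℂ whose diagonal [z1,z3] is interior satisfies area(f) ≥ C_K · diam(f)², where area(f) is the 2-dimensional Lebesgue measure of the region of f. -/

import Mathlib

open Complex Set MeasureTheory Filter
open scoped Classical ENNReal

noncomputable section

/-- A quadrilateral face `[z1 z2 z3 z4]` given by its four vertices in `ℂ`. -/
structure Quad where
  z1 : ℂ
  z2 : ℂ
  z3 : ℂ
  z4 : ℂ

namespace Quad

/-- The set of the four vertices of the face. -/
def vertexSet (q : Quad) : Set ℂ := {q.z1, q.z2, q.z3, q.z4}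

/-- The four edges of the face, as segments. -/
def edges (q : Quad) : Set (Set ℂ) :=
  {segment ℝ q.z1 q.z2, segment ℝ q.z2 q.z3, segment ℝ q.z3 q.z4, segment ℝ q.z4 q.z1}

/-- The four vertices are pairwise distinct. -/
def Distinct (q : Quad) : Prop :=
  q.z1 ≠ q.z2 ∧ q.z1 ≠ q.z3 ∧ q.z1 ≠ q.z4 ∧ q.z2 ≠ q.z3 ∧ q.z2 ≠ q.z4 ∧ q.z3 ≠ q.z4

/-- The face is simple: vertices pairwise distinct, and two edges meet only when
consecutive, and then only at their shared endpoint. -/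
def Simple (q : Quad) : Prop :=
  q.Distinct ∧
  segment ℝ q.z1 q.z2 ∩ segment ℝ q.z2 q.z3 = {q.z2} ∧
  segment ℝ q.z2 q.z3 ∩ segment ℝ q.z3 q.z4 = {q.z3} ∧
  segment ℝ q.z3 q.z4 ∩ segment ℝ q.z4 q.z1 = {q.z4} ∧
  segment ℝ q.z4 q.z1 ∩ segment ℝ q.z1 q.z2 = {q.z1} ∧
  segment ℝ q.z1 q.z2 ∩ segment ℝ q.z3 q.z4 = ∅ ∧
  segment ℝ q.z2 q.z3 ∩ segment ℝ q.z4 q.z1 = ∅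

/-- The maximal distance between two of the four vertices. -/
def diam (q : Quad) : ℝ := Metric.diam q.vertexSet

/-- The lengths of the four edges. -/
def edgeLen (q : Quad) : Fin 4 → ℝ
  | 0 => dist q.z1 q.z2
  | 1 => dist q.z2 q.z3
  | 2 => dist q.z3 q.z4
  | 3 => dist q.z4 q.z1

/-- `K`-roundness: all four unsigned vertex angles are at least `2π/K`, and the ratio of
the lengths of any two edges is at most `K`. -/
def KRound (q : Quad) (K : ℝ) : Prop :=
  2 * Real.pi / K ≤ EuclideanGeometry.angle q.z4 q.z1 q.z2 ∧
  2 * Real.pi / K ≤ EuclideanGeometry.angle q.z1 q.z2 q.z3 ∧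
  2 * Real.pi / K ≤ EuclideanGeometry.angle q.z2 q.z3 q.z4 ∧
  2 * Real.pi / K ≤ EuclideanGeometry.angle q.z3 q.z4 q.z1 ∧
  ∀ i j : Fin 4, q.edgeLen i ≤ K * q.edgeLen j

/-- The diagonals of the face are orthogonal. -/
def Orthogonal (q : Quad) : Prop :=
  ((starRingEnd ℂ) (q.z3 - q.z1) * (q.z4 - q.z2)).re = 0

/-- The diagonal `[z1,z3]` is interior: its open segment is disjoint from the four edges. -/
def DiagInterior13 (q : Quad) : Prop :=
  ∀ e ∈ q.edges, openSegment ℝ q.z1 q.z3 ∩ e = ∅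

/-- The region of the face: the union of the two triangles obtained by cutting along an
interior diagonal. -/
def region (q : Quad) : Set ℂ :=
  if q.DiagInterior13 then
    convexHull ℝ {q.z1, q.z2, q.z3} ∪ convexHull ℝ {q.z1, q.z3, q.z4}
  else
    convexHull ℝ {q.z2, q.z3, q.z4} ∪ convexHull ℝ {q.z2, q.z4, q.z1}

/-- The area of the face: the Lebesgue measure of its region. -/
def area (q : Quad) : ℝ := (volume q.region).toReal

/-- `v` is the discrete gradient of `u` on the (orthogonal) face `q`:
`v ⊙ (z3 − z1) = u z3 − u z1` and `v ⊙ (z4 − z2) = u z4 − u z2`. -/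
def IsDiscreteGrad (q : Quad) (u : ℂ → ℝ) (v : ℂ) : Prop :=
  ((starRingEnd ℂ) v * (q.z3 - q.z1)).re = u q.z3 - u q.z1 ∧
  ((starRingEnd ℂ) v * (q.z4 - q.z2)).re = u q.z4 - u q.z2

/-- The contribution of the face `q` to the discrete Laplacian of `u` at a vertex `ζ`
(after cyclic relabeling so that the first vertex is `ζ`). -/
def lapTerm (q : Quad) (u : ℂ → ℝ) (ζ : ℂ) : ℝ :=
  if ζ = q.z1 then dist q.z2 q.z4 / dist q.z1 q.z3 * (u q.z3 - u q.z1)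
  else if ζ = q.z2 then dist q.z1 q.z3 / dist q.z2 q.z4 * (u q.z4 - u q.z2)
  else if ζ = q.z3 then dist q.z2 q.z4 / dist q.z1 q.z3 * (u q.z1 - u q.z3)
  else if ζ = q.z4 then dist q.z1 q.z3 / dist q.z2 q.z4 * (u q.z2 - u q.z4)
  else 0

end Quad

/-- A quadrilateral lattice: a finite nonempty collection of simple quadrilateral faces with
pairwise disjoint interiors, intersecting only in common vertices or common edges, each edge
on at most two faces, whose union is connected and simply connected. -/
structure QuadLattice where
  faces : Finset Quad
  faces_nonempty : faces.Nonempty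
  faces_simple : ∀ f ∈ faces, f.Simple
  interiors_disjoint : ∀ f ∈ faces, ∀ g ∈ faces, f ≠ g →
    interior f.region ∩ interior g.region = ∅
  region_inter : ∀ f ∈ faces, ∀ g ∈ faces, f ≠ g →
    f.region ∩ g.region = ∅ ∨
    (∃ v, v ∈ f.vertexSet ∧ v ∈ g.vertexSet ∧ f.region ∩ g.region = {v}) ∨
    (∃ e, e ∈ f.edges ∧ e ∈ g.edges ∧ f.region ∩ g.region = e)
  edge_le_two_faces : ∀ f ∈ faces, ∀ e ∈ f.edges,
    ({g : Quad | g ∈ faces ∧ e ∈ g.edges}).ncard ≤ 2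
  support_connected : IsConnected (⋃ f ∈ faces, f.region)
  support_simplyConnected : SimplyConnectedSpace (⋃ f ∈ faces, f.region)

namespace QuadLattice

/-- The union of the regions of all faces. -/
def support (Q : QuadLattice) : Set ℂ := ⋃ f ∈ Q.faces, f.region

/-- The set `Q*` of all vertices of the lattice. -/
def verts (Q : QuadLattice) : Set ℂ := ⋃ f ∈ Q.faces, f.vertexSet

/-- The boundary `∂Q`: the union of all edges belonging to exactly one face. -/
def boundary (Q : QuadLattice) : Set ℂ :=
  ⋃₀ {e | (∃ f ∈ Q.faces, e ∈ f.edges) ∧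
      ({g : Quad | g ∈ Q.faces ∧ e ∈ g.edges}).ncard = 1}

/-- `M(Q)`: the maximal edge length of the lattice. -/
def M (Q : QuadLattice) : ℝ :=
  sSup {r : ℝ | ∃ f ∈ Q.faces, ∃ i : Fin 4, r = f.edgeLen i}

/-- All faces of the lattice are `K`-round. -/
def KRound (Q : QuadLattice) (K : ℝ) : Prop := ∀ f ∈ Q.faces, f.KRound K

/-- All faces of the lattice have orthogonal diagonals. -/
def Orthogonal (Q : QuadLattice) : Prop := ∀ f ∈ Q.faces, f.Orthogonal

/-- `black` is a black/white two-coloring of the vertices: in every face the two diagonal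
pairs receive opposite colors. -/
def IsColoring (Q : QuadLattice) (black : ℂ → Prop) : Prop :=
  ∀ f ∈ Q.faces, (black f.z1 ↔ black f.z3) ∧ (black f.z2 ↔ black f.z4) ∧
    (black f.z1 ↔ ¬ black f.z2)

/-- The discrete Laplacian of `u` at the point `ζ`. -/
def lap (Q : QuadLattice) (u : ℂ → ℝ) (ζ : ℂ) : ℝ :=
  ∑ f ∈ Q.faces, f.lapTerm u ζ

/-- `u` is discrete harmonic: its discrete Laplacian vanishes at every interior vertex. -/
def DiscreteHarmonic (Q : QuadLattice) (u : ℂ → ℝ) : Prop :=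
  ∀ ζ ∈ Q.verts, ζ ∉ Q.boundary → Q.lap u ζ = 0

/-- The maximum of `|u z' − u w'|` over pairs of vertices of `Q` lying on `∂Q` within
distance `r` of `c` (zero if there are no such vertices). -/
def bdryOsc (Q : QuadLattice) (u : ℂ → ℝ) (c : ℂ) (r : ℝ) : ℝ :=
  sSup (insert 0 {d : ℝ | ∃ z' ∈ Q.verts ∩ Q.boundary, ∃ w' ∈ Q.verts ∩ Q.boundary,
    dist z' c ≤ r ∧ dist w' c ≤ r ∧ d = |u z' - u w'|})

end QuadLattice

/-- A sequence of quadrilateral lattices approximates a bounded domain `Ω` if the maximal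
edge lengths tend to `0` and the Hausdorff distance between `∂Qₙ` and `∂Ω` tends to `0`. -/
def Approximates (Q : ℕ → QuadLattice) (Ω : Set ℂ) : Prop :=
  Tendsto (fun n => (Q n).M) atTop (nhds 0) ∧
  Tendsto (fun n => Metric.hausdorffDist ((Q n).boundary) (frontier Ω)) atTop (nhds 0)

/-- The signed (shoelace) area of the quadrilateral `abcd`. -/
def signedArea (a b c d : ℂ) : ℝ :=
  (1 / 2) * ((starRingEnd ℂ) a * b + (starRingEnd ℂ) b * c +
    (starRingEnd ℂ) c * d + (starRingEnd ℂ) d * a).im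

/-- The continuous Laplacian `Δg = D²g(1,1) + D²g(i,i)` of `g : ℂ → ℝ`. -/
def lapCont (g : ℂ → ℝ) (z : ℂ) : ℝ :=
  iteratedFDeriv ℝ 2 g z ![1, 1] + iteratedFDeriv ℝ 2 g z ![Complex.I, Complex.I]

/-- The closed axis-parallel square `[a, a+r] × [b, b+r]` in `ℂ`. -/
def sqSet (a b r : ℝ) : Set ℂ :=
  {z : ℂ | z.re ∈ Set.Icc a (a + r) ∧ z.im ∈ Set.Icc b (b + r)}

end

section AuxForAreaLowerBound
open Complex MeasureTheory Set
open scoped Pointwise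

lemma myAbs_toReal_add (a b : Real.Angle) :
    |(a + b).toReal| ≤ |a.toReal| + |b.toReal| := by
  rcases le_or_gt Real.pi (|a.toReal| + |b.toReal|) with h | h
  · exact (Real.Angle.abs_toReal_le_pi _).trans h
  · have habs : |a.toReal + b.toReal| < Real.pi := (abs_add_le _ _).trans_lt h
    have h1 : a + b = ((a.toReal + b.toReal : ℝ) : Real.Angle) := by
      rw [Real.Angle.coe_add, a.coe_toReal, b.coe_toReal]
    have h2 : ((a.toReal + b.toReal : ℝ) : Real.Angle).toReal = a.toReal + b.toReal := by
      rw [Real.Angle.toReal_coe_eq_self_iff]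
      obtain ⟨hl, hr⟩ := abs_lt.mp habs
      exact ⟨hl, hr.le⟩
    rw [h1, h2]
    exact abs_add_le _ _

lemma myAngle_triangle {u d w : ℂ} (hu : u ≠ 0) (hd : d ≠ 0) (hw : w ≠ 0) :
    InnerProductGeometry.angle u w ≤
      InnerProductGeometry.angle u d + InnerProductGeometry.angle d w := by
  haveI : Fact (Module.finrank ℝ ℂ = 2) := ⟨Complex.finrank_real_complex⟩
  rw [Complex.orientation.angle_eq_abs_oangle_toReal hu hw,
      Complex.orientation.angle_eq_abs_oangle_toReal hu hd,
      Complex.orientation.angle_eq_abs_oangle_toReal hd hw,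
      ← Complex.orientation.oangle_add hu hd hw]
  exact myAbs_toReal_add _ _

lemma mySin_ge {δ x : ℝ} (hδ0 : 0 < δ) (hδ : δ ≤ Real.pi / 2) (h1 : δ ≤ x)
    (h2 : x ≤ Real.pi - δ) : Real.sin δ ≤ Real.sin x := by
  have hpi := Real.pi_pos
  rcases le_or_gt x (Real.pi / 2) with h | h
  · exact Real.strictMonoOn_sin.monotoneOn ⟨by linarith, hδ⟩ ⟨by linarith, h⟩ h1
  · rw [← Real.sin_pi_sub x]
    exact Real.strictMonoOn_sin.monotoneOn ⟨by linarith, hδ⟩ ⟨by linarith, by linarith⟩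
      (by linarith)

noncomputable def linT (u v : ℂ) : ℂ →ₗ[ℝ] ℂ where
  toFun z := z.re • u + z.im • v
  map_add' z w := by
    simp only [Complex.add_re, Complex.add_im, add_smul]
    abel
  map_smul' c z := by
    simp only [Complex.smul_re, Complex.smul_im, RingHom.id_apply, smul_add, smul_smul,
      smul_eq_mul]

lemma linT_det (u v : ℂ) : LinearMap.det (linT u v) = u.re * v.im - u.im * v.re := by
  rw [← LinearMap.det_toMatrix Complex.basisOneI, Matrix.det_fin_two]
  simp [LinearMap.toMatrix_apply, linT, Complex.coe_basisOneI, Complex.coe_basisOneI_repr]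
  ring

def sqSet' (a b r : ℝ) : Set ℂ :=
  {z : ℂ | z.re ∈ Set.Icc a (a + r) ∧ z.im ∈ Set.Icc b (b + r)}

lemma volume_sqSet' {r : ℝ} (hr : 0 ≤ r) (a b : ℝ) :
    volume (sqSet' a b r) = ENNReal.ofReal (r * r) := by
  have hset : sqSet' a b r =
      Complex.measurableEquivRealProd ⁻¹' (Set.Icc a (a + r) ×ˢ Set.Icc b (b + r)) := rfl
  rw [hset, Complex.volume_preserving_equiv_real_prod.measure_preimage
    ((measurableSet_Icc.prod measurableSet_Icc).nullMeasurableSet)]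
  rw [MeasureTheory.Measure.volume_eq_prod, MeasureTheory.Measure.prod_prod,
    Real.volume_Icc, Real.volume_Icc, add_sub_cancel_left, add_sub_cancel_left, ENNReal.ofReal_mul hr]

lemma comb_mem_hull {p q r : ℂ} {a b : ℝ} (ha : 0 ≤ a) (hb : 0 ≤ b) (hab : a + b ≤ 1) :
    p + (a • (q - p) + b • (r - p)) ∈ convexHull ℝ ({p, q, r} : Set ℂ) := by
  have hp : p ∈ convexHull ℝ ({p, q, r} : Set ℂ) := subset_convexHull ℝ _ (by simp)
  rcases eq_or_lt_of_le (by positivity : (0:ℝ) ≤ a + b) with h0 | h0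
  · have ha0 : a = 0 := by linarith
    have hb0 : b = 0 := by linarith
    simpa [ha0, hb0] using hp
  · set t := a + b with ht
    have hw : (a / t) • q + (b / t) • r ∈ convexHull ℝ ({p, q, r} : Set ℂ) := by
      apply segment_subset_convexHull (show q ∈ ({p,q,r}:Set ℂ) by simp) (show r ∈ ({p,q,r}:Set ℂ) by simp)
      exact ⟨a / t, b / t, div_nonneg ha h0.le, div_nonneg hb h0.le,
        by field_simp; exact ht.symm, rfl⟩
    have key : p + (a • (q - p) + b • (r - p)) =
        (1 - t) • p + t • ((a / t) • q + (b / t) • r) := by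
      have htne : t ≠ 0 := ne_of_gt h0
      rw [smul_add, smul_smul, smul_smul, mul_div_cancel₀ _ htne, mul_div_cancel₀ _ htne]
      rw [ht]
      module
    rw [key]
    exact (convex_convexHull ℝ _).segment_subset hp hw
      ⟨1 - t, t, by linarith, h0.le, by ring, rfl⟩

lemma det_eq_sin (u v : ℂ) :
    |u.re * v.im - u.im * v.re| =
      Real.sin (InnerProductGeometry.angle u v) * (‖u‖ * ‖v‖) := by
  rw [InnerProductGeometry.sin_angle_mul_norm_mul_norm]
  have hinn : (inner ℝ u v : ℝ) = (starRingEnd ℂ u * v).re := by rw [Complex.inner, mul_comm]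
  have huu : (inner ℝ u u : ℝ) = ‖u‖ * ‖u‖ := real_inner_self_eq_norm_mul_norm u
  have hvv : (inner ℝ v v : ℝ) = ‖v‖ * ‖v‖ := real_inner_self_eq_norm_mul_norm v
  have him : (starRingEnd ℂ u * v).im = u.re * v.im - u.im * v.re := by
    simp [Complex.mul_im]; ring
  have hnorm : (starRingEnd ℂ u * v).re ^ 2 + (starRingEnd ℂ u * v).im ^ 2
      = (‖u‖ * ‖v‖) ^ 2 := by
    have : ‖starRingEnd ℂ u * v‖ = ‖u‖ * ‖v‖ := by
      simp [Complex.norm_conj]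
    rw [← this, Complex.sq_norm, Complex.normSq_apply]
    ring
  rw [huu, hvv, hinn, ← him]
  have : ‖u‖ * ‖u‖ * (‖v‖ * ‖v‖) - (starRingEnd ℂ u * v).re * (starRingEnd ℂ u * v).re
      = (starRingEnd ℂ u * v).im ^ 2 := by nlinarith
  rw [this, Real.sqrt_sq_eq_abs]

lemma tri_vol (p q r : ℂ) :
    ENNReal.ofReal ((1/4) * (Real.sin (EuclideanGeometry.angle q p r) * (dist p q * dist p r)))
      ≤ volume (convexHull ℝ ({p, q, r} : Set ℂ)) := by
  have hsub : (fun z : ℂ => p + linT (q - p) (r - p) z) '' sqSet' 0 0 (1/2)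
      ⊆ convexHull ℝ ({p, q, r} : Set ℂ) := by
    rintro _ ⟨z, hz, rfl⟩
    obtain ⟨⟨h1, h2⟩, h3, h4⟩ := hz
    exact comb_mem_hull h1 h3 (by norm_num at h2 h4 ⊢; linarith)
  have himg : volume ((fun z : ℂ => p + linT (q - p) (r - p) z) '' sqSet' 0 0 (1/2))
      = ENNReal.ofReal |LinearMap.det (linT (q - p) (r - p))| * ENNReal.ofReal (1/2 * (1/2)) := by
    have hvadd : (fun z : ℂ => p + linT (q - p) (r - p) z) '' sqSet' 0 0 (1/2)
        = p +ᵥ (linT (q - p) (r - p) '' sqSet' 0 0 (1/2)) := by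
      rw [← Set.image_vadd, Set.image_image]
      rfl
    rw [hvadd, measure_vadd, MeasureTheory.Measure.addHaar_image_linearMap,
      volume_sqSet' (by norm_num)]
  have hX : (1/4 : ℝ) * (Real.sin (EuclideanGeometry.angle q p r) * (dist p q * dist p r))
      = |LinearMap.det (linT (q - p) (r - p))| * (1/2 * (1/2)) := by
    rw [linT_det, det_eq_sin, EuclideanGeometry.angle, vsub_eq_sub, vsub_eq_sub,
      dist_eq_norm' p q, dist_eq_norm' p r]
    ring
  calc ENNReal.ofReal ((1/4) * (Real.sin (EuclideanGeometry.angle q p r) * (dist p q * dist p r)))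
      = ENNReal.ofReal |LinearMap.det (linT (q - p) (r - p))| * ENNReal.ofReal (1/2 * (1/2)) := by
        rw [hX, ENNReal.ofReal_mul (abs_nonneg _)]
    _ = volume ((fun z : ℂ => p + linT (q - p) (r - p) z) '' sqSet' 0 0 (1/2)) := himg.symm
    _ ≤ volume (convexHull ℝ ({p, q, r} : Set ℂ)) := measure_mono hsub

end AuxForAreaLowerBound

set_option maxHeartbeats 1000000 in
/-- For every `K ≥ 4` there is `C_K > 0` such that every simple `K`-round
quadrilateral with interior diagonal `[z1,z3]` satisfies `area(f) ≥ C_K · diam(f)²`. -/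
theorem area_lower_bound (K : ℝ) (hK : 4 ≤ K) :
    ∃ C : ℝ, 0 < C ∧ ∀ q : Quad, q.Simple → q.KRound K → q.DiagInterior13 →
      C * q.diam ^ 2 ≤ q.area := by
  have hπ := Real.pi_pos
  have hK0 : (0:ℝ) < K := by linarith
  have hδ0 : 0 < Real.pi / K := by positivity
  have hδπ : Real.pi / K ≤ Real.pi / 2 := by
    apply div_le_div_of_nonneg_left hπ.le (by norm_num) (by linarith)
  have hsinpos : 0 < Real.sin (Real.pi / K) :=
    Real.sin_pos_of_pos_of_lt_pi hδ0 (lt_of_le_of_lt hδπ (by linarith))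
  refine ⟨Real.sin (Real.pi / K) / (16 * K ^ 4), by positivity, ?_⟩
  intro q hs hkr hdiag
  obtain ⟨⟨h12, h13, h14, h23, h24, h34⟩, -⟩ := hs
  obtain ⟨ha1, ha2, ha3, ha4, hedge⟩ := hkr
  have hh : 2 * Real.pi / K = Real.pi / K + Real.pi / K := by ring
  have e20 : dist q.z3 q.z4 ≤ K * dist q.z1 q.z2 := by simpa [Quad.edgeLen] using hedge 2 0
  have e30 : dist q.z4 q.z1 ≤ K * dist q.z1 q.z2 := by simpa [Quad.edgeLen] using hedge 3 0
  have e01 : dist q.z1 q.z2 ≤ K * dist q.z2 q.z3 := by simpa [Quad.edgeLen] using hedge 0 1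
  have e10 : dist q.z2 q.z3 ≤ K * dist q.z1 q.z2 := by simpa [Quad.edgeLen] using hedge 1 0
  have e02 : dist q.z1 q.z2 ≤ K * dist q.z3 q.z4 := by simpa [Quad.edgeLen] using hedge 0 2
  have e12 : dist q.z2 q.z3 ≤ K * dist q.z3 q.z4 := by simpa [Quad.edgeLen] using hedge 1 2
  have e03 : dist q.z1 q.z2 ≤ K * dist q.z4 q.z1 := by simpa [Quad.edgeLen] using hedge 0 3
  have e13 : dist q.z2 q.z3 ≤ K * dist q.z4 q.z1 := by simpa [Quad.edgeLen] using hedge 1 3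
  have d12 := dist_nonneg (x := q.z1) (y := q.z2)
  have d23 := dist_nonneg (x := q.z2) (y := q.z3)
  have d34 := dist_nonneg (x := q.z3) (y := q.z4)
  have d41 := dist_nonneg (x := q.z4) (y := q.z1)
  have hdiam : q.diam ≤ K * (dist q.z1 q.z2 + dist q.z2 q.z3) := by
    have hK1 : (0:ℝ) ≤ K - 1 := by linarith
    have p12 : dist q.z1 q.z2 ≤ K * (dist q.z1 q.z2 + dist q.z2 q.z3) := by
      nlinarith [mul_nonneg hK1 d12, mul_nonneg hK0.le d23]
    have p23 : dist q.z2 q.z3 ≤ K * (dist q.z1 q.z2 + dist q.z2 q.z3) := by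
      nlinarith [mul_nonneg hK1 d23, mul_nonneg hK0.le d12]
    have p13 : dist q.z1 q.z3 ≤ K * (dist q.z1 q.z2 + dist q.z2 q.z3) := by
      nlinarith [dist_triangle q.z1 q.z2 q.z3, mul_nonneg hK1 d12, mul_nonneg hK1 d23]
    have p14 : dist q.z1 q.z4 ≤ K * (dist q.z1 q.z2 + dist q.z2 q.z3) := by
      rw [dist_comm]
      nlinarith [e30, mul_nonneg hK0.le d23]
    have p24 : dist q.z2 q.z4 ≤ K * (dist q.z1 q.z2 + dist q.z2 q.z3) := by
      nlinarith [dist_triangle q.z2 q.z3 q.z4, e20, mul_nonneg hK1 d23]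
    have p34 : dist q.z3 q.z4 ≤ K * (dist q.z1 q.z2 + dist q.z2 q.z3) := by
      nlinarith [e20, mul_nonneg hK0.le d23]
    apply Metric.diam_le_of_forall_dist_le (by positivity)
    intro x hx y hy
    simp only [Quad.vertexSet, Set.mem_insert_iff, Set.mem_singleton_iff] at hx hy
    rcases hx with rfl | rfl | rfl | rfl <;> rcases hy with rfl | rfl | rfl | rfl <;>
      first
        | (rw [dist_self]; positivity)
        | exact p12 | exact p13 | exact p14 | exact p23 | exact p24 | exact p34
        | (rw [dist_comm]
           first
             | exact p12 | exact p13 | exact p14 | exact p23 | exact p24 | exact p34)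
  have hdd : 0 ≤ q.diam := Metric.diam_nonneg
  have hu4 : q.z4 - q.z1 ≠ 0 := sub_ne_zero_of_ne (Ne.symm h14)
  have hu2 : q.z2 - q.z1 ≠ 0 := sub_ne_zero_of_ne (Ne.symm h12)
  have hu3 : q.z3 - q.z1 ≠ 0 := sub_ne_zero_of_ne (Ne.symm h13)
  have hsplit : EuclideanGeometry.angle q.z4 q.z1 q.z2 ≤
      EuclideanGeometry.angle q.z4 q.z1 q.z3 + EuclideanGeometry.angle q.z3 q.z1 q.z2 := by
    have := myAngle_triangle hu4 hu3 hu2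
    simpa [EuclideanGeometry.angle, vsub_eq_sub] using this
  have hcase : Real.pi / K ≤ EuclideanGeometry.angle q.z3 q.z1 q.z2 ∨
      Real.pi / K ≤ EuclideanGeometry.angle q.z4 q.z1 q.z3 := by
    by_contra hcon
    push_neg at hcon
    linarith [hcon.1, hcon.2]
  have hreg : q.region =
      convexHull ℝ {q.z1, q.z2, q.z3} ∪ convexHull ℝ {q.z1, q.z3, q.z4} := by
    rw [Quad.region, if_pos hdiag]
  have hfin : MeasureTheory.volume q.region ≠ ⊤ := by
    rw [hreg]
    have c1 : IsCompact (convexHull ℝ ({q.z1, q.z2, q.z3} : Set ℂ)) :=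
      (Set.toFinite _).isCompact_convexHull ℝ
    have c2 : IsCompact (convexHull ℝ ({q.z1, q.z3, q.z4} : Set ℂ)) :=
      (Set.toFinite _).isCompact_convexHull ℝ
    exact ne_of_lt ((measure_union_le _ _).trans_lt
      (ENNReal.add_lt_top.mpr ⟨c1.measure_lt_top, c2.measure_lt_top⟩))
  have key : ∀ p a r : ℂ, convexHull ℝ ({p, a, r} : Set ℂ) ⊆ q.region →
      Real.pi / K ≤ EuclideanGeometry.angle a p r →
      EuclideanGeometry.angle a p r ≤ Real.pi - Real.pi / K →
      q.diam ≤ 2 * K ^ 2 * dist p a → q.diam ≤ 2 * K ^ 2 * dist p r →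
      Real.sin (Real.pi / K) / (16 * K ^ 4) * q.diam ^ 2 ≤ q.area := by
    intro p a r hsubQ hθ1 hθ2 hda hdb
    have hsin : Real.sin (Real.pi / K) ≤ Real.sin (EuclideanGeometry.angle a p r) :=
      mySin_ge hδ0 hδπ hθ1 hθ2
    have hsnn : 0 ≤ Real.sin (EuclideanGeometry.angle a p r) :=
      Real.sin_nonneg_of_nonneg_of_le_pi (EuclideanGeometry.angle_nonneg a p r)
        (EuclideanGeometry.angle_le_pi a p r)
    have hXnn : 0 ≤ (1/4 : ℝ) *
        (Real.sin (EuclideanGeometry.angle a p r) * (dist p a * dist p r)) := by positivity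
    have h1 : ENNReal.ofReal ((1/4) *
        (Real.sin (EuclideanGeometry.angle a p r) * (dist p a * dist p r)))
        ≤ MeasureTheory.volume q.region := (tri_vol p a r).trans (measure_mono hsubQ)
    have h2 : (1/4 : ℝ) *
        (Real.sin (EuclideanGeometry.angle a p r) * (dist p a * dist p r)) ≤ q.area := by
      have := ENNReal.toReal_mono hfin h1
      rwa [ENNReal.toReal_ofReal hXnn] at this
    have hdd2 : q.diam * q.diam ≤ (2 * K ^ 2 * dist p a) * (2 * K ^ 2 * dist p r) :=
      mul_le_mul hda hdb hdd (by positivity)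
    have hA := mul_le_mul_of_nonneg_left hdd2 hsinpos.le
    have hB := mul_le_mul_of_nonneg_right hsin
      (mul_nonneg (dist_nonneg (x := p) (y := a)) (dist_nonneg (x := p) (y := r)))
    have hC := mul_le_mul_of_nonneg_left hB (show (0:ℝ) ≤ 4 * K ^ 4 by positivity)
    have h3 : Real.sin (Real.pi / K) / (16 * K ^ 4) * q.diam ^ 2 ≤ (1/4 : ℝ) *
        (Real.sin (EuclideanGeometry.angle a p r) * (dist p a * dist p r)) := by
      rw [div_mul_eq_mul_div, div_le_iff₀ (by positivity), pow_two]
      nlinarith [hA, hC]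
    linarith
  rcases hcase with hc | hc
  · have hset : ({q.z2, q.z1, q.z3} : Set ℂ) = {q.z1, q.z2, q.z3} := by
      ext w; simp only [Set.mem_insert_iff, Set.mem_singleton_iff]; tauto
    apply key q.z2 q.z1 q.z3
    · rw [hreg, hset]; exact Set.subset_union_left
    · linarith [ha2]
    · have hsum := EuclideanGeometry.angle_add_angle_add_angle_eq_pi
        (p₁ := q.z3) (p₂ := q.z1) q.z2 h13
      have := EuclideanGeometry.angle_nonneg q.z2 q.z3 q.z1
      have hc' : Real.pi / K ≤ EuclideanGeometry.angle q.z3 q.z1 q.z2 := hc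
      linarith
    · rw [dist_comm]
      nlinarith [hdiam, mul_le_mul_of_nonneg_left e10 hK0.le,
        mul_nonneg (by nlinarith : (0:ℝ) ≤ K ^ 2 - K) d12]
    · nlinarith [hdiam, mul_le_mul_of_nonneg_left e01 hK0.le,
        mul_nonneg (by nlinarith : (0:ℝ) ≤ K ^ 2 - K) d23]
  · have hset : ({q.z4, q.z3, q.z1} : Set ℂ) = {q.z1, q.z3, q.z4} := by
      ext w; simp only [Set.mem_insert_iff, Set.mem_singleton_iff]; tauto
    apply key q.z4 q.z3 q.z1
    · rw [hreg, hset]; exact Set.subset_union_right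
    · linarith [ha4]
    · have hsum := EuclideanGeometry.angle_add_angle_add_angle_eq_pi
        (p₁ := q.z3) (p₂ := q.z4) q.z1 h34.symm
      have := EuclideanGeometry.angle_nonneg q.z1 q.z3 q.z4
      linarith
    · rw [dist_comm]
      nlinarith [hdiam, mul_le_mul_of_nonneg_left e02 hK0.le,
        mul_le_mul_of_nonneg_left e12 hK0.le]
    · nlinarith [hdiam, mul_le_mul_of_nonneg_left e03 hK0.le,
        mul_le_mul_of_nonneg_left e13 hK0.le]
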